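/- If [u,v] is a tight interval of stochastic vectors in ℝ^m (i.e., each endpoint is attained: for each i there exist x, y in the set with x_i = u_i and y_i = v_i), then a stochastic vector x with u ≤ x ≤ v is an extreme point of the set {x stochastic : u ≤ x ≤ v} if and only if there is at most one index i with u_i < x_i < v_i. -/

import Mathlib

/-- A stochastic vector in `ℝ^m`: nonnegative entries summing to 1. -/
def IsStoch {m : ℕ} (x : Fin m → ℝ) : Prop := (∀ i, 0 ≤ x i) ∧ ∑ i, x i = 1

lemma convex_forced (a b p q r : ℝ) (ha : 0 < a) (hb : 0 < b) (hab : a + b = 1)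
    (hc : a * p + b * q = r) (hp : r ≤ p) (hq : r ≤ q) : p = r ∧ q = r := by
  constructor
  · by_contra hne
    have hpr : r < p := lt_of_le_of_ne hp (Ne.symm hne)
    have key : a * r + b * r = r := by rw [← add_mul, hab, one_mul]
    linarith [mul_lt_mul_of_pos_left hpr ha, mul_le_mul_of_nonneg_left hq hb.le, key]
  · by_contra hne
    have hqr : r < q := lt_of_le_of_ne hq (Ne.symm hne)
    have key : a * r + b * r = r := by rw [← add_mul, hab, one_mul]
    linarith [mul_lt_mul_of_pos_left hqr hb, mul_le_mul_of_nonneg_left hp ha.le, key]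

lemma convex_forced' (a b p q r : ℝ) (ha : 0 < a) (hb : 0 < b) (hab : a + b = 1)
    (hc : a * p + b * q = r) (hp : p ≤ r) (hq : q ≤ r) : p = r ∧ q = r := by
  constructor
  · by_contra hne
    have hpr : p < r := lt_of_le_of_ne hp hne
    have key : a * r + b * r = r := by rw [← add_mul, hab, one_mul]
    linarith [mul_lt_mul_of_pos_left hpr ha, mul_le_mul_of_nonneg_left hq hb.le, key]
  · by_contra hne
    have hqr : q < r := lt_of_le_of_ne hq hne
    have key : a * r + b * r = r := by rw [← add_mul, hab, one_mul]
    linarith [mul_lt_mul_of_pos_left hqr hb, mul_le_mul_of_nonneg_left hp ha.le, key]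

/-- For a tight interval of stochastic vectors, a member is an extreme point of
the polytope iff it has at most one free element. -/
theorem stmt_11 (m : ℕ) (u v : Fin m → ℝ)
    (hu0 : ∀ i, 0 ≤ u i) (huv : ∀ i, u i ≤ v i)
    (T : Set (Fin m → ℝ))
    (hT : T = {x : Fin m → ℝ | IsStoch x ∧ ∀ i, u i ≤ x i ∧ x i ≤ v i})
    (htight : ∀ i, (∃ x ∈ T, x i = u i) ∧ (∃ y ∈ T, y i = v i))
    (x : Fin m → ℝ) (hx : x ∈ T) :
    x ∈ T.extremePoints ℝ ↔
      ∀ i j : Fin m, (u i < x i ∧ x i < v i) → (u j < x j ∧ x j < v j) → i = j := by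
  subst hT
  obtain ⟨⟨hx0, hx1⟩, hxb⟩ := hx
  constructor
  · intro hext i j hi hj
    by_contra hne
    set ε : ℝ := min (min (v i - x i) (x j - u j)) (min (x i - u i) (v j - x j)) with hεdef
    have hε : 0 < ε := by
      simp only [hεdef, lt_min_iff]
      refine ⟨⟨?_, ?_⟩, ?_, ?_⟩ <;> linarith [hi.1, hi.2, hj.1, hj.2]
    have hε1 : ε ≤ v i - x i := le_trans (min_le_left _ _) (min_le_left _ _)
    have hε2 : ε ≤ x j - u j := le_trans (min_le_left _ _) (min_le_right _ _)
    have hε3 : ε ≤ x i - u i := le_trans (min_le_right _ _) (min_le_left _ _)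
    have hε4 : ε ≤ v j - x j := le_trans (min_le_right _ _) (min_le_right _ _)
    set y : Fin m → ℝ := fun k => x k + (if k = i then ε else 0) - (if k = j then ε else 0) with hy
    set z : Fin m → ℝ := fun k => x k - (if k = i then ε else 0) + (if k = j then ε else 0) with hz
    have hyk : ∀ k, u k ≤ y k ∧ y k ≤ v k := by
      intro k
      by_cases hki : k = i
      · subst hki
        simp [hy, hne]
        constructor <;> linarith [hi.1]
      · by_cases hkj : k = j
        · subst hkj
          simp [hy, hki]
          constructor <;> linarith [hj.2]
        · simp only [hy, if_neg hki, if_neg hkj]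
          constructor <;> linarith [(hxb k).1, (hxb k).2]
    have hzk : ∀ k, u k ≤ z k ∧ z k ≤ v k := by
      intro k
      by_cases hki : k = i
      · subst hki
        simp [hz, hne]
        constructor <;> linarith
      · by_cases hkj : k = j
        · subst hkj
          simp [hz, hki]
          constructor <;> linarith
        · simp only [hz, if_neg hki, if_neg hkj]
          constructor <;> linarith [(hxb k).1, (hxb k).2]
    have hsum : ∀ w : Fin m → ℝ, (∑ k, (w k + (if k = i then ε else 0) - (if k = j then ε else 0)))
        = ∑ k, w k := by
      intro w
      simp [Finset.sum_add_distrib, Finset.sum_sub_distrib, Finset.sum_ite_eq']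
    have hyT : y ∈ {x : Fin m → ℝ | IsStoch x ∧ ∀ i, u i ≤ x i ∧ x i ≤ v i} := by
      refine ⟨⟨fun k => le_trans (hu0 k) (hyk k).1, ?_⟩, hyk⟩
      rw [hy]; rw [hsum x]; exact hx1
    have hzT : z ∈ {x : Fin m → ℝ | IsStoch x ∧ ∀ i, u i ≤ x i ∧ x i ≤ v i} := by
      refine ⟨⟨fun k => le_trans (hu0 k) (hzk k).1, ?_⟩, hzk⟩
      have : ∑ k, z k = ∑ k, x k := by
        simp [hz, Finset.sum_add_distrib, Finset.sum_sub_distrib, Finset.sum_ite_eq']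
      rw [this, hx1]
    have hseg : x ∈ openSegment ℝ y z := by
      refine ⟨1/2, 1/2, by norm_num, by norm_num, by norm_num, ?_⟩
      funext k
      simp only [Pi.add_apply, Pi.smul_apply, smul_eq_mul, hy, hz]
      ring
    have hyx := hext.2 hyT hzT hseg
    have : y i = x i := by rw [hyx]
    simp [hy, hne] at this
    linarith
  · intro h
    refine ⟨⟨⟨hx0, hx1⟩, hxb⟩, ?_⟩
    intro y hy z hz hseg
    obtain ⟨a, b, ha, hb, hab, hxyz⟩ := hseg
    have hpt : ∀ k, a * y k + b * z k = x k := by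
      intro k
      have := congrFun hxyz k
      simpa using this
    have hfix : ∀ k, ¬(u k < x k ∧ x k < v k) → y k = x k ∧ z k = x k := by
      intro k hk
      rcases not_and_or.mp hk with h1 | h2
      · have hxu : x k = u k := le_antisymm (not_lt.mp h1) ((hxb k).1)
        exact convex_forced a b (y k) (z k) (x k) ha hb hab (hpt k)
          (hxu ▸ (hy.2 k).1) (hxu ▸ (hz.2 k).1)
      · have hxv : x k = v k := le_antisymm ((hxb k).2) (not_lt.mp h2)
        exact convex_forced' a b (y k) (z k) (x k) ha hb hab (hpt k)
          (hxv ▸ (hy.2 k).2) (hxv ▸ (hz.2 k).2)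
    have key : ∀ k, y k = x k ∧ z k = x k := by
      intro k
      by_cases hk : u k < x k ∧ x k < v k
      · have herase : ∀ w : Fin m → ℝ, (∀ j, j ≠ k → w j = x j) → (∑ j, w j = 1) → w k = x k := by
          intro w hw hw1
          have e1 : w k + ∑ j ∈ Finset.univ.erase k, w j = 1 := by
            rw [Finset.add_sum_erase _ _ (Finset.mem_univ k)]; exact hw1
          have e2 : x k + ∑ j ∈ Finset.univ.erase k, x j = 1 := by
            rw [Finset.add_sum_erase _ _ (Finset.mem_univ k)]; exact hx1
          have e3 : ∑ j ∈ Finset.univ.erase k, w j = ∑ j ∈ Finset.univ.erase k, x j := by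
            refine Finset.sum_congr rfl fun j hj => ?_
            exact hw j (Finset.ne_of_mem_erase hj)
          linarith
        have hfree : ∀ j, j ≠ k → y j = x j ∧ z j = x j := by
          intro j hj
          by_cases hjf : u j < x j ∧ x j < v j
          · exact absurd (h j k hjf hk) hj
          · exact hfix j hjf
        exact ⟨herase y (fun j hj => (hfree j hj).1) hy.1.2,
               herase z (fun j hj => (hfree j hj).2) hz.1.2⟩
      · exact hfix k hk
    exact funext fun k => (key k).1
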